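/- Let u be a nonprincipal ultrafilter on ℕ and let (G_n)_{n∈ℕ} be a family of simple graphs such that for every n, G_n contains no cycle of length at most n. Then the ultraproduct graph ∏_u G_n is acyclic; in particular it admits a proper colouring with 2 colours (its chromatic number is at most 2). -/

import Mathlib

/-- The setoid on the dependent product identifying functions agreeing on a set in `u`. -/
def upSetoid (u : Ultrafilter ℕ) (V : ℕ → Type*) : Setoid (∀ n, V n) where
  r f g := {n | f n = g n} ∈ u
  iseqv := by
    refine ⟨fun f => ?_, fun {f g} h => ?_, fun {f g h} h1 h2 => ?_⟩
    · simp only [Set.setOf_true]; exact Filter.univ_mem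
    · have : {n | f n = g n} ⊆ {n | g n = f n} := fun n hn => hn.symm
      exact Filter.mem_of_superset h this
    · have : {n | f n = g n} ∩ {n | g n = h n} ⊆ {n | f n = h n} :=
        fun n hn => hn.1.trans hn.2
      exact Filter.mem_of_superset (Filter.inter_mem h1 h2) this

/-- The ultraproduct of a family of simple graphs over an ultrafilter on ℕ. -/
def upGraph (u : Ultrafilter ℕ) (V : ℕ → Type*) (G : ∀ n, SimpleGraph (V n)) :
    SimpleGraph (Quotient (upSetoid u V)) where
  Adj x y := Quotient.liftOn₂ x y (fun f g => {n | (G n).Adj (f n) (g n)} ∈ u)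
    (by
      intro f g f' g' hf hg
      have key : ∀ {a a' b b' : ∀ n, V n}, {n | a n = a' n} ∈ u → {n | b n = b' n} ∈ u →
          {n | (G n).Adj (a n) (b n)} ∈ u → {n | (G n).Adj (a' n) (b' n)} ∈ u := by
        intro a a' b b' ha hb hadj
        have : {n | a n = a' n} ∩ {n | b n = b' n} ∩ {n | (G n).Adj (a n) (b n)} ⊆
            {n | (G n).Adj (a' n) (b' n)} := by
          rintro n ⟨⟨h1, h2⟩, h3⟩
          simp only [Set.mem_setOf_eq] at *
          rw [← h1, ← h2]
          exact h3
        exact Filter.mem_of_superset (Filter.inter_mem (Filter.inter_mem ha hb) hadj) this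
      have hf' : {n | f' n = f n} ∈ u :=
        Filter.mem_of_superset hf fun n hn => hn.symm
      have hg' : {n | g' n = g n} ∈ u :=
        Filter.mem_of_superset hg fun n hn => hn.symm
      exact propext ⟨fun h => key hf hg h, fun h => key hf' hg' h⟩)
  symm := by
    constructor
    intro x y
    induction x using Quotient.ind with
    | _ f =>
    induction y using Quotient.ind with
    | _ g =>
    intro h
    have hsub : {n | (G n).Adj (f n) (g n)} ⊆ {n | (G n).Adj (g n) (f n)} :=
      fun n hn => (G n).symm.symm _ _ hn
    exact Filter.mem_of_superset h hsub
  loopless := by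
    constructor
    intro x
    induction x using Quotient.ind with
    | _ f =>
    intro h
    have hempty : ({n | (G n).Adj (f n) (f n)} : Set ℕ) = ∅ := by
      ext n
      simp only [Set.mem_setOf_eq, Set.mem_empty_iff_false, iff_false]
      exact fun hn => (G n).loopless.irrefl _ hn
    have h' : {n | (G n).Adj (f n) (f n)} ∈ u := h
    rw [hempty] at h'
    exact Filter.empty_notMem (u : Filter ℕ) h'

open SimpleGraph in
lemma upGraph_adj_out (u : Ultrafilter ℕ) (V : ℕ → Type) (G : ∀ n, SimpleGraph (V n))
    (x y : Quotient (upSetoid u V)) :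
    (upGraph u V G).Adj x y ↔ {n | (G n).Adj (x.out n) (y.out n)} ∈ u := by
  conv_lhs => rw [← Quotient.out_eq x, ← Quotient.out_eq y]
  exact Iff.rfl

lemma upGraph_out_ne (u : Ultrafilter ℕ) (V : ℕ → Type)
    {x y : Quotient (upSetoid u V)} (h : x ≠ y) : {n | x.out n ≠ y.out n} ∈ u := by
  have hne : {n | x.out n = y.out n} ∉ u := by
    intro hm
    exact h (by rw [← Quotient.out_eq x, ← Quotient.out_eq y]; exact Quotient.sound hm)
  have := (Ultrafilter.compl_mem_iff_notMem (f := u)).mpr hne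
  simpa [Set.compl_setOf] using this

lemma push_walk (u : Ultrafilter ℕ) (V : ℕ → Type) (G : ∀ n, SimpleGraph (V n)) (n : ℕ)
    {x y : Quotient (upSetoid u V)} (p : (upGraph u V G).Walk x y)
    (h : ∀ a ∈ p.support, ∀ b ∈ p.support,
      (upGraph u V G).Adj a b → (G n).Adj (a.out n) (b.out n)) :
    ∃ q : (G n).Walk (x.out n) (y.out n), q.length = p.length ∧
      q.support = p.support.map (fun z => z.out n) ∧
      q.edges = p.edges.map (Sym2.map (fun z => z.out n)) := by
  induction p with
  | nil => exact ⟨SimpleGraph.Walk.nil, rfl, rfl, rfl⟩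
  | @cons a b c hadj p ih =>
    have hsub : ∀ z ∈ p.support, z ∈ (SimpleGraph.Walk.cons hadj p).support := by
      intro z hz
      rw [SimpleGraph.Walk.support_cons]
      exact List.mem_cons_of_mem _ hz
    obtain ⟨q, hlen, hsupp, hedges⟩ := ih (fun a' ha' b' hb' => h a' (hsub _ ha') b' (hsub _ hb'))
    have hn : (G n).Adj (a.out n) (b.out n) := by
      apply h a (SimpleGraph.Walk.start_mem_support _) b
        (hsub _ (SimpleGraph.Walk.start_mem_support _)) hadj
    refine ⟨SimpleGraph.Walk.cons hn q, by simp [hlen], ?_, ?_⟩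
    · rw [SimpleGraph.Walk.support_cons, SimpleGraph.Walk.support_cons, List.map_cons, hsupp]
    · rw [SimpleGraph.Walk.edges_cons, SimpleGraph.Walk.edges_cons, List.map_cons, hedges]
      rfl

lemma eventually_list {α : Type*} (l : Filter ℕ) (L : List α) (P : α → ℕ → Prop)
    (h : ∀ a ∈ L, ∀ᶠ n in l, P a n) : ∀ᶠ n in l, ∀ a ∈ L, P a n := by
  induction L with
  | nil => simp
  | cons a L ih =>
    simp only [List.forall_mem_cons]
    exact (h a List.mem_cons_self).and (ih fun b hb => h b (List.mem_cons_of_mem a hb))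


-- parity lemma in acyclic graphs
open SimpleGraph in
lemma parity_ne {V : Type} [DecidableEq V] {G : SimpleGraph V} (hg : G.IsAcyclic) {r u v : V}
    (huv : G.Adj u v) (p : G.Walk r u) (hp : p.IsPath) (q : G.Walk r v) (hq : q.IsPath) :
    p.length % 2 ≠ q.length % 2 := by
  by_cases hv : v ∈ p.support
  · -- then q = p.takeUntil v and p = q + edge
    have hq' : (p.takeUntil v hv).IsPath := hp.takeUntil hv
    have hQ : q = p.takeUntil v hv := by
      have := hg.path_unique ⟨q, hq⟩ ⟨p.takeUntil v hv, hq'⟩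
      exact congrArg Subtype.val this
    have hd : (p.dropUntil v hv).IsPath := hp.dropUntil hv
    have hd1 : (p.dropUntil v hv).length = 1 := by
      have := hg.path_unique ⟨p.dropUntil v hv, hd⟩ (Path.singleton huv.symm)
      have := congrArg (fun w => SimpleGraph.Walk.length w.val) this
      simpa [Path.singleton] using this
    have hadd : (p.takeUntil v hv).length + (p.dropUntil v hv).length = p.length := by
      have := congrArg SimpleGraph.Walk.length (p.take_spec hv)
      rw [SimpleGraph.Walk.length_append] at this
      exact this
    rw [hQ]
    omega
  · -- then q = p.concat huv
    have hc : (p.concat huv).IsPath := by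
      apply SimpleGraph.Walk.IsPath.mk'
      rw [SimpleGraph.Walk.support_concat]
      exact List.Nodup.append hp.support_nodup (List.nodup_singleton v)
        (by simpa using fun hvv => hv hvv)
    have hQ : q = p.concat huv := by
      have := hg.path_unique ⟨q, hq⟩ ⟨p.concat huv, hc⟩
      exact congrArg Subtype.val this
    rw [hQ, SimpleGraph.Walk.length_concat]
    omega

open SimpleGraph in
lemma acyclic_colorable {V : Type} {G : SimpleGraph V} (hg : G.IsAcyclic) : G.Colorable 2 := by
  classical
  have hre : ∀ v : V, G.Reachable ((G.connectedComponentMk v).out) v := by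
    intro v
    have : G.connectedComponentMk ((G.connectedComponentMk v).out) = G.connectedComponentMk v :=
      (G.connectedComponentMk v).out_eq
    exact (SimpleGraph.ConnectedComponent.eq.mp this)
  let P : ∀ v : V, G.Path ((G.connectedComponentMk v).out) v := fun v => ((hre v).some).toPath
  refine ⟨SimpleGraph.Coloring.mk (fun v => ⟨(P v).val.length % 2, Nat.mod_lt _ two_pos⟩) ?_⟩
  intro a b hab hfalse
  have hcomp : G.connectedComponentMk a = G.connectedComponentMk b :=
    SimpleGraph.ConnectedComponent.sound hab.reachable
  -- transport the path for b to have source rep a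
  have hrep : (G.connectedComponentMk b).out = (G.connectedComponentMk a).out := by rw [hcomp]
  have hkey := parity_ne hg hab (P a).val (P a).property
    ((P b).val.copy hrep rfl) ((SimpleGraph.Walk.isPath_copy _ _ _).mpr (P b).property)
  rw [SimpleGraph.Walk.length_copy] at hkey
  exact hkey (congrArg Fin.val hfalse)
/-- if `u` is nonprincipal and each `G n` has no cycle of length at most `n`,
then the ultraproduct graph is acyclic, and in particular 2-colourable. -/
theorem upGraph_acyclic (u : Ultrafilter ℕ)
    (hu : ∀ s : Set ℕ, sᶜ.Finite → s ∈ u)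
    (V : ℕ → Type) (G : ∀ n, SimpleGraph (V n))
    (hG : ∀ n : ℕ, ∀ (v : V n) (c : (G n).Walk v v), c.IsCycle → n < c.length) :
    (upGraph u V G).IsAcyclic ∧ (upGraph u V G).Colorable 2 := by
  classical
  have hac : (upGraph u V G).IsAcyclic := by
    intro x c hc
    -- the good set of indices
    have hA : ∀ᶠ n in (u : Filter ℕ), ∀ a ∈ c.support, ∀ b ∈ c.support,
        (upGraph u V G).Adj a b → (G n).Adj (a.out n) (b.out n) := by
      apply eventually_list
      intro a _
      apply eventually_list
      intro b _
      by_cases hab : (upGraph u V G).Adj a b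
      · have := (upGraph_adj_out u V G a b).mp hab
        filter_upwards [this] with n hn _
        exact hn
      · filter_upwards with n hn
        exact absurd hn hab
    have hB : ∀ᶠ n in (u : Filter ℕ), ∀ a ∈ c.support, ∀ b ∈ c.support,
        a ≠ b → a.out n ≠ b.out n := by
      apply eventually_list
      intro a _
      apply eventually_list
      intro b _
      by_cases hab : a = b
      · filter_upwards with n hn
        exact absurd hab hn
      · filter_upwards [upGraph_out_ne u V hab] with n hn _
        exact hn
    have hC : ∀ᶠ n in (u : Filter ℕ), c.length ≤ n := by
      apply hu
      have : {n : ℕ | c.length ≤ n}ᶜ ⊆ Set.Iio c.length := by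
        intro n hn
        simpa [Set.mem_Iio] using hn
      exact (Set.finite_Iio c.length).subset this
    obtain ⟨n, hn1, hn2, hn3⟩ := (hA.and (hB.and hC)).exists
    -- decompose the cycle
    cases c with
    | nil => exact hc.ne_nil rfl
    | @cons _ w _ hadj p =>
      rw [SimpleGraph.Walk.cons_isCycle_iff] at hc
      obtain ⟨hp, hxe⟩ := hc
      have hsub : ∀ z ∈ p.support, z ∈ (SimpleGraph.Walk.cons hadj p).support := by
        intro z hz
        rw [SimpleGraph.Walk.support_cons]
        exact List.mem_cons_of_mem _ hz
      obtain ⟨q, hlen, hsupp, hedges⟩ := push_walk u V G n p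
        (fun a ha b hb => hn1 a (hsub _ ha) b (hsub _ hb))
      have hxw : (G n).Adj (x.out n) (w.out n) :=
        hn1 x (SimpleGraph.Walk.start_mem_support _) w
          (hsub _ (SimpleGraph.Walk.start_mem_support _)) hadj
      have hinj : ∀ a ∈ p.support, ∀ b ∈ p.support, a.out n = b.out n → a = b := by
        intro a ha b hb hab
        by_contra hne
        exact hn2 a (hsub _ ha) b (hsub _ hb) hne hab
      have hcyc : (SimpleGraph.Walk.cons hxw q).IsCycle := by
        rw [SimpleGraph.Walk.cons_isCycle_iff]
        constructor
        · apply SimpleGraph.Walk.IsPath.mk'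
          rw [hsupp]
          exact List.Nodup.map_on hinj hp.support_nodup
        · rw [hedges]
          intro hmem
          obtain ⟨e, he, heq⟩ := List.mem_map.mp hmem
          induction e with
          | _ a b =>
            have ha : a ∈ p.support := p.fst_mem_support_of_mem_edges he
            have hb : b ∈ p.support := p.snd_mem_support_of_mem_edges he
            have hx : x ∈ p.support := SimpleGraph.Walk.end_mem_support p
            have hw : w ∈ p.support := SimpleGraph.Walk.start_mem_support p
            rw [Sym2.map_pair_eq, Sym2.eq_iff] at heq
            rcases heq with ⟨h1, h2⟩ | ⟨h1, h2⟩
            · rw [hinj a ha x hx h1, hinj b hb w hw h2] at he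
              exact hxe he
            · rw [hinj a ha w hw h1, hinj b hb x hx h2, Sym2.eq_swap] at he
              exact hxe he
      have := hG n (x.out n) (SimpleGraph.Walk.cons hxw q) hcyc
      simp only [SimpleGraph.Walk.length_cons, hlen] at this
      simp only [SimpleGraph.Walk.length_cons] at hn3
      omega
  exact ⟨hac, acyclic_colorable hac⟩
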